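/- Let d = 2^n for a non-negative integer n, let ζ_k = 2 cos(π(2k−1)/(2d)) for k = 1, …, d, and let T be the d × d Vandermonde matrix with (i,j)-entry ζ_i^{j−1}. Then the Chebyshev-Frolov lattice T(ℤ^d) is admissible: there exists δ > 0 such that ∏_{i=1}^{d} |(T k)_i| ≥ δ for every nonzero k ∈ ℤ^d. -/

import Mathlib

/-- The Vandermonde matrix of the points `ζ_k = 2 cos(π(2k−1)/(2d))`, `k = 1, …, d`. -/
noncomputable def chebVandermonde (d : ℕ) : Matrix (Fin d) (Fin d) ℝ :=
  Matrix.of fun i j =>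
    (2 * Real.cos (Real.pi * (2 * ((i : ℕ) + 1 : ℝ) - 1) / (2 * (d : ℝ)))) ^ (j : ℕ)

namespace ChebFrolovAux

open Polynomial

private lemma exp_add_exp_neg (θ : ℝ) :
    Complex.exp ((θ : ℂ) * Complex.I) + (Complex.exp ((θ : ℂ) * Complex.I))⁻¹
      = ((2 * Real.cos θ : ℝ) : ℂ) := by
  rw [← Complex.exp_neg]
  have h : -((θ : ℂ) * Complex.I) = ((-θ : ℝ) : ℂ) * Complex.I := by push_cast; ring
  rw [h, Complex.exp_mul_I, Complex.exp_mul_I]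
  push_cast
  simp only [Complex.cos_neg, Complex.sin_neg]
  ring

private lemma pow_add_inv_pow (d : ℕ) (hd : 0 < d) (m : ℕ) :
    Complex.exp (2 * (Real.pi : ℂ) * Complex.I / ((4 * d : ℕ) : ℂ)) ^ m
      + (Complex.exp (2 * (Real.pi : ℂ) * Complex.I / ((4 * d : ℕ) : ℂ)) ^ m)⁻¹
    = ((2 * Real.cos (Real.pi * m / (2 * d)) : ℝ) : ℂ) := by
  rw [← Complex.exp_nat_mul]
  have hd0 : (d : ℂ) ≠ 0 := by exact_mod_cast hd.ne'
  have h : (m : ℂ) * (2 * (Real.pi : ℂ) * Complex.I / ((4 * d : ℕ) : ℂ))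
      = ((Real.pi * m / (2 * d) : ℝ) : ℂ) * Complex.I := by
    push_cast
    field_simp
    ring
  rw [h, exp_add_exp_neg]

/-- The main arithmetic lemma: the product of `|f(ζ_k)|` over the roots
`ζ_k = 2cos(π(2k+1)/(2d))`, `k = 0, …, d-1`, `d = 2^n`, is at least 1 for any nonzero
integer polynomial `f` of degree `< d`. -/
private lemma core (n : ℕ) (f : Polynomial ℤ) (hf : f ≠ 0) (hdeg : f.natDegree < 2 ^ n) :
    1 ≤ ∏ j ∈ Finset.range (2 ^ n),
        |(aeval (2 * Real.cos (Real.pi * (2 * (j : ℝ) + 1) / (2 * ((2 ^ n : ℕ) : ℝ)))) f : ℝ)| := by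
  classical
  have hdpos : 0 < 2 ^ n := Nat.pow_pos (n := n) (by norm_num)
  set N : ℕ := 2 ^ (n + 2) with hN
  have hN4 : N = 4 * 2 ^ n := by rw [hN]; ring
  have hNpos : 0 < N := Nat.pow_pos (by norm_num)
  set Np : ℕ+ := ⟨N, hNpos⟩ with hNp
  haveI : NeZero ((Np : ℕ) : ℚ) := ⟨by exact_mod_cast hNpos.ne'⟩
  haveI : IsCyclotomicExtension {(Np : ℕ)} ℚ (CyclotomicField Np ℚ) :=
    CyclotomicField.isCyclotomicExtension _ _
  haveI hfd : FiniteDimensional ℚ (CyclotomicField Np ℚ) :=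
    IsCyclotomicExtension.finiteDimensional {(Np : ℕ)} ℚ _
  set η : CyclotomicField Np ℚ := IsCyclotomicExtension.zeta Np ℚ _ with hηdef
  have hη : IsPrimitiveRoot η Np := IsCyclotomicExtension.zeta_spec Np ℚ _
  have hirr : Irreducible (Polynomial.cyclotomic Np ℚ) :=
    Polynomial.cyclotomic.irreducible_rat Np.pos
  set η₀ : ℂ := Complex.exp (2 * (Real.pi : ℂ) * Complex.I / (N : ℂ)) with hη₀def
  have hη₀ : IsPrimitiveRoot η₀ N := by
    have := Complex.isPrimitiveRoot_exp N hNpos.ne'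
    simpa [hη₀def] using this
  set ξ : CyclotomicField Np ℚ := η + η⁻¹ with hξdef
  set x : CyclotomicField Np ℚ := aeval ξ f with hxdef
  -- the key complex value computation
  have hpowval : ∀ m : ℕ, η₀ ^ m + (η₀ ^ m)⁻¹
      = ((2 * Real.cos (Real.pi * m / (2 * ((2 ^ n : ℕ) : ℝ))) : ℝ) : ℂ) := by
    intro m
    have := pow_add_inv_pow (2 ^ n) hdpos m
    rw [hη₀def]
    rw [show ((N : ℕ) : ℂ) = ((4 * 2 ^ n : ℕ) : ℂ) by rw [hN4]] at *
    exact this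
  -- integrality
  have hηint : IsIntegral ℤ η := hη.isIntegral Np.pos
  have hηinv : η⁻¹ = η ^ (N - 1) := by
    refine inv_eq_of_mul_eq_one_left ?_
    rw [← pow_succ, Nat.sub_add_cancel hNpos]
    exact hη.pow_eq_one
  have hξint : IsIntegral ℤ ξ := by
    rw [hξdef, hηinv]
    exact hηint.add (hηint.pow _)
  have hxint : IsIntegral ℤ x :=
    IsIntegral.of_mem_of_fg (Algebra.adjoin ℤ {ξ}) hξint.fg_adjoin_singleton _
      (Polynomial.aeval_mem_adjoin_singleton ℤ ξ)
  -- the norm as a product over embeddings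
  have hnorm : algebraMap ℚ ℂ (Algebra.norm ℚ x)
      = ∏ σ : CyclotomicField Np ℚ →ₐ[ℚ] ℂ, σ x :=
    Algebra.norm_eq_prod_embeddings ℚ ℂ x
  have hσval : ∀ σ : CyclotomicField Np ℚ →ₐ[ℚ] ℂ, σ x = aeval (σ η + (σ η)⁻¹) f := by
    intro σ
    have h1 : σ x = aeval (σ ξ) f := by
      rw [hxdef]
      exact (Polynomial.aeval_algHom_apply (σ.restrictScalars ℤ) ξ f).symm
    rw [h1, hξdef, map_add, map_inv₀]
  set e := hη.embeddingsEquivPrimitiveRoots ℂ hirr with hedef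
  have hprod1 : (∏ σ : CyclotomicField Np ℚ →ₐ[ℚ] ℂ, σ x)
      = ∏ ω ∈ primitiveRoots N ℂ, aeval (ω + ω⁻¹) f := by
    rw [← Finset.prod_coe_sort (primitiveRoots N ℂ)]
    refine Fintype.prod_equiv e _ _ fun σ => ?_
    rw [hσval σ]
    congr 1 <;> rw [hη.embeddingsEquivPrimitiveRoots_apply_coe]
  have hexp : ∀ i : ℕ, Complex.exp (2 * (Real.pi : ℂ) * Complex.I * (i / N)) = η₀ ^ i := by
    intro i
    rw [hη₀def, ← Complex.exp_nat_mul]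
    congr 1
    ring
  have himg : primitiveRoots N ℂ
      = ((Finset.range N).filter (fun m => Nat.Coprime m N)).image (fun m => η₀ ^ m) := by
    ext ω
    rw [mem_primitiveRoots hNpos, Complex.isPrimitiveRoot_iff ω N hNpos.ne']
    simp only [Finset.mem_image, Finset.mem_filter, Finset.mem_range]
    constructor
    · rintro ⟨i, hi, hco, rfl⟩
      exact ⟨i, ⟨hi, hco⟩, (hexp i).symm⟩
    · rintro ⟨i, ⟨hi, hco⟩, rfl⟩
      exact ⟨i, hi, hco, hexp i⟩
  have hprod2 : (∏ ω ∈ primitiveRoots N ℂ, aeval (ω + ω⁻¹) f)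
      = ∏ m ∈ (Finset.range N).filter (fun m => Nat.Coprime m N),
          aeval (η₀ ^ m + (η₀ ^ m)⁻¹) f := by
    rw [himg]
    refine Finset.prod_image ?_
    intro a ha b hb hab
    exact hη₀.pow_inj (Finset.mem_range.1 (Finset.mem_filter.1 ha).1)
      (Finset.mem_range.1 (Finset.mem_filter.1 hb).1) hab
  have hfilter : (Finset.range N).filter (fun m => Nat.Coprime m N)
      = (Finset.range (2 * 2 ^ n)).image (fun j => 2 * j + 1) := by
    ext m
    simp only [Finset.mem_filter, Finset.mem_range, Finset.mem_image]
    have hco2 : Nat.Coprime m N ↔ Odd m := by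
      rw [hN, Nat.coprime_pow_right_iff (Nat.succ_pos _)]
      exact Nat.coprime_two_right
    constructor
    · rintro ⟨hm, hco⟩
      obtain ⟨j, rfl⟩ := hco2.mp hco
      exact ⟨j, by omega, by ring⟩
    · rintro ⟨j, hj, rfl⟩
      exact ⟨by omega, hco2.mpr ⟨j, by ring⟩⟩
  have hprod3 : (∏ m ∈ (Finset.range N).filter (fun m => Nat.Coprime m N),
          aeval (η₀ ^ m + (η₀ ^ m)⁻¹) f)
      = ∏ j ∈ Finset.range (2 * 2 ^ n),
          aeval (η₀ ^ (2 * j + 1) + (η₀ ^ (2 * j + 1))⁻¹) f := by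
    rw [hfilter]
    exact Finset.prod_image (by intro a _ b _ h; simp only at h; omega)
  -- reflection
  have hrefl : ∀ m ≤ N, η₀ ^ (N - m) + (η₀ ^ (N - m))⁻¹ = η₀ ^ m + (η₀ ^ m)⁻¹ := by
    intro m hm
    have h1 : η₀ ^ (N - m) * η₀ ^ m = 1 := by
      rw [← pow_add, Nat.sub_add_cancel hm]
      exact hη₀.pow_eq_one
    have h2 : (η₀ ^ m)⁻¹ = η₀ ^ (N - m) := inv_eq_of_mul_eq_one_left h1
    rw [← h2, inv_inv, add_comm]
  -- split the product into two equal halves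
  have hsplit : (∏ j ∈ Finset.range (2 * 2 ^ n),
          aeval (η₀ ^ (2 * j + 1) + (η₀ ^ (2 * j + 1))⁻¹) f)
      = (∏ j ∈ Finset.range (2 ^ n),
          aeval (η₀ ^ (2 * j + 1) + (η₀ ^ (2 * j + 1))⁻¹) f) ^ 2 := by
    rw [two_mul, Finset.prod_range_add]
    have h2 : (∏ j ∈ Finset.range (2 ^ n),
            aeval (η₀ ^ (2 * (2 ^ n + j) + 1) + (η₀ ^ (2 * (2 ^ n + j) + 1))⁻¹) f)
        = ∏ j ∈ Finset.range (2 ^ n),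
            aeval (η₀ ^ (2 * j + 1) + (η₀ ^ (2 * j + 1))⁻¹) f := by
      rw [← Finset.prod_range_reflect
        (fun j => aeval (η₀ ^ (2 * (2 ^ n + j) + 1) + (η₀ ^ (2 * (2 ^ n + j) + 1))⁻¹) f) (2 ^ n)]
      refine Finset.prod_congr rfl fun j hj => ?_
      have hj' : j < 2 ^ n := Finset.mem_range.1 hj
      have harg : 2 * (2 ^ n + (2 ^ n - 1 - j)) + 1 = N - (2 * j + 1) := by omega
      have hle : 2 * j + 1 ≤ N := by omega
      simp only [harg, hrefl _ hle]
    rw [h2, sq]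
  -- the real product P
  set P : ℝ := ∏ j ∈ Finset.range (2 ^ n),
      aeval (2 * Real.cos (Real.pi * (2 * (j : ℝ) + 1) / (2 * ((2 ^ n : ℕ) : ℝ)))) f with hPdef
  have hGval : ∀ j : ℕ,
      aeval (η₀ ^ (2 * j + 1) + (η₀ ^ (2 * j + 1))⁻¹) f
      = ((aeval (2 * Real.cos (Real.pi * (2 * (j : ℝ) + 1) / (2 * ((2 ^ n : ℕ) : ℝ)))) f : ℝ) : ℂ)
      := by
    intro j
    rw [hpowval (2 * j + 1)]
    rw [show ((2 * j + 1 : ℕ) : ℝ) = 2 * (j : ℝ) + 1 by push_cast; ring]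
    exact Polynomial.aeval_algHom_apply (Complex.ofRealAm.restrictScalars ℤ) _ f
  have hPC : (∏ j ∈ Finset.range (2 ^ n),
      aeval (η₀ ^ (2 * j + 1) + (η₀ ^ (2 * j + 1))⁻¹) f) = ((P : ℝ) : ℂ) := by
    rw [hPdef, Complex.ofReal_prod]
    exact Finset.prod_congr rfl fun j _ => hGval j
  have hchain : algebraMap ℚ ℂ (Algebra.norm ℚ x) = ((P ^ 2 : ℝ) : ℂ) := by
    rw [hnorm, hprod1, hprod2, hprod3, hsplit, hPC, Complex.ofReal_pow]
  -- the minimal polynomial argument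
  have hξintQ : IsIntegral ℚ ξ := hξint.tower_top
  have hμne : minpoly ℚ ξ ≠ 0 := minpoly.ne_zero hξintQ
  have hconj : ∀ j : ℕ, j < 2 ^ n → minpoly ℚ
      (2 * Real.cos (Real.pi * (2 * (j : ℝ) + 1) / (2 * ((2 ^ n : ℕ) : ℝ)))) = minpoly ℚ ξ := by
    intro j hj
    have hcop : Nat.Coprime (2 * j + 1) N := by
      rw [hN, Nat.coprime_pow_right_iff (Nat.succ_pos _)]
      exact Nat.coprime_two_right.mpr ⟨j, by ring⟩
    have hmem : η₀ ^ (2 * j + 1) ∈ primitiveRoots N ℂ :=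
      (mem_primitiveRoots hNpos).mpr (hη₀.pow_of_coprime _ hcop)
    set σ := e.symm ⟨η₀ ^ (2 * j + 1), hmem⟩ with hσdef
    have hση : σ η = η₀ ^ (2 * j + 1) := by
      have h1 : (e σ : ℂ) = σ η := hη.embeddingsEquivPrimitiveRoots_apply_coe ℂ hirr σ
      have h2 : e σ = ⟨η₀ ^ (2 * j + 1), hmem⟩ := by rw [hσdef]; exact e.apply_symm_apply _
      rw [h2] at h1
      exact h1.symm
    have hσξ : σ ξ = ((2 * Real.cos (Real.pi * (2 * (j : ℝ) + 1) / (2 * ((2 ^ n : ℕ) : ℝ))) : ℝ)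
        : ℂ) := by
      rw [hξdef, map_add, map_inv₀, hση, hpowval (2 * j + 1)]
      rw [show ((2 * j + 1 : ℕ) : ℝ) = 2 * (j : ℝ) + 1 by push_cast; ring]
    calc minpoly ℚ (2 * Real.cos (Real.pi * (2 * (j : ℝ) + 1) / (2 * ((2 ^ n : ℕ) : ℝ))))
        = minpoly ℚ (((2 * Real.cos (Real.pi * (2 * (j : ℝ) + 1) / (2 * ((2 ^ n : ℕ) : ℝ))) : ℝ)
            : ℂ)) :=
          (minpoly.algHom_eq (Complex.ofRealAm.restrictScalars ℚ) Complex.ofReal_injective _).symm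
      _ = minpoly ℚ (σ ξ) := by rw [hσξ]
      _ = minpoly ℚ ξ := minpoly.algHom_eq σ (RingHom.injective (σ : CyclotomicField Np ℚ →+* ℂ)) ξ
  -- the d points are distinct
  have hRinj : ∀ a : ℕ, a < 2 ^ n → ∀ b : ℕ, b < 2 ^ n →
      2 * Real.cos (Real.pi * (2 * (a : ℝ) + 1) / (2 * ((2 ^ n : ℕ) : ℝ)))
        = 2 * Real.cos (Real.pi * (2 * (b : ℝ) + 1) / (2 * ((2 ^ n : ℕ) : ℝ))) → a = b := by
    intro a ha b hb hab
    have hd0 : (0 : ℝ) < ((2 ^ n : ℕ) : ℝ) := by exact_mod_cast hdpos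
    have hmem : ∀ c : ℕ, c < 2 ^ n →
        Real.pi * (2 * (c : ℝ) + 1) / (2 * ((2 ^ n : ℕ) : ℝ)) ∈ Set.Icc 0 Real.pi := by
      intro c hc
      constructor
      · positivity
      · rw [div_le_iff₀ (by positivity)]
        have hc' : (2 * (c : ℝ) + 1) ≤ 2 * ((2 ^ n : ℕ) : ℝ) := by
          have : (c : ℝ) + 1 ≤ ((2 ^ n : ℕ) : ℝ) := by exact_mod_cast hc
          linarith
        nlinarith [Real.pi_pos]
    have h2 : Real.cos (Real.pi * (2 * (a : ℝ) + 1) / (2 * ((2 ^ n : ℕ) : ℝ)))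
        = Real.cos (Real.pi * (2 * (b : ℝ) + 1) / (2 * ((2 ^ n : ℕ) : ℝ))) := by linarith
    have h3 := Real.injOn_cos (hmem a ha) (hmem b hb) h2
    have h4 : (2 * (a : ℝ) + 1) = 2 * (b : ℝ) + 1 := by
      have hD : (2 * ((2 ^ n : ℕ) : ℝ)) ≠ 0 := by positivity
      have h3c := (div_eq_div_iff hD hD).mp h3
      have h3b := mul_right_cancel₀ hD h3c
      exact mul_left_cancel₀ Real.pi_ne_zero h3b
    have : (a : ℝ) = b := by linarith
    exact_mod_cast this
  have hdegμ : 2 ^ n ≤ (minpoly ℚ ξ).natDegree := by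
    have hmapne : (minpoly ℚ ξ).map (algebraMap ℚ ℝ) ≠ 0 :=
      (Polynomial.map_ne_zero_iff (algebraMap ℚ ℝ).injective).mpr hμne
    set Z : Finset ℝ := (Finset.range (2 ^ n)).image
      (fun j : ℕ => 2 * Real.cos (Real.pi * (2 * (j : ℝ) + 1) / (2 * ((2 ^ n : ℕ) : ℝ)))) with hZ
    have hcard : Z.card = 2 ^ n := by
      rw [hZ]
      rw [Finset.card_image_of_injOn (fun a ha b hb hab =>
        hRinj a (Finset.mem_range.1 ha) b (Finset.mem_range.1 hb) hab)]
      exact Finset.card_range _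
    have hsub : Z.val ⊆ ((minpoly ℚ ξ).map (algebraMap ℚ ℝ)).roots := by
      intro t ht
      rw [Finset.mem_val] at ht
      rw [hZ] at ht
      obtain ⟨j, hj, rfl⟩ := Finset.mem_image.1 ht
      rw [Polynomial.mem_roots hmapne, Polynomial.IsRoot.def, Polynomial.eval_map,
        ← Polynomial.aeval_def]
      have hmp := minpoly.aeval ℚ
        (2 * Real.cos (Real.pi * (2 * (j : ℝ) + 1) / (2 * ((2 ^ n : ℕ) : ℝ))))
      rw [hconj j (Finset.mem_range.1 hj)] at hmp
      exact hmp
    calc 2 ^ n = Z.card := hcard.symm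
      _ ≤ ((minpoly ℚ ξ).map (algebraMap ℚ ℝ)).natDegree :=
          Polynomial.card_le_degree_of_subset_roots hsub
      _ = (minpoly ℚ ξ).natDegree :=
          Polynomial.natDegree_map_eq_of_injective (algebraMap ℚ ℝ).injective _
  have hne : ∀ j ∈ Finset.range (2 ^ n),
      (aeval (2 * Real.cos (Real.pi * (2 * (j : ℝ) + 1) / (2 * ((2 ^ n : ℕ) : ℝ)))) f : ℝ)
        ≠ 0 := by
    intro j hj h0
    have h1 : (aeval (2 * Real.cos (Real.pi * (2 * (j : ℝ) + 1) / (2 * ((2 ^ n : ℕ) : ℝ))))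
        (f.map (algebraMap ℤ ℚ)) : ℝ) = 0 := by
      rw [Polynomial.aeval_map_algebraMap]; exact h0
    have h2 : minpoly ℚ ξ ∣ f.map (algebraMap ℤ ℚ) := by
      rw [← hconj j (Finset.mem_range.1 hj)]
      exact minpoly.dvd ℚ _ h1
    have h3 : f.map (algebraMap ℤ ℚ) ≠ 0 :=
      (Polynomial.map_ne_zero_iff (algebraMap ℤ ℚ).injective_int).mpr hf
    have h4 := Polynomial.natDegree_le_of_dvd h2 h3
    rw [Polynomial.natDegree_map_eq_of_injective (algebraMap ℤ ℚ).injective_int] at h4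
    exact absurd hdeg (not_lt.mpr (le_trans hdegμ h4))
  have hPne : P ≠ 0 := by
    rw [hPdef]
    exact Finset.prod_ne_zero_iff.mpr hne
  obtain ⟨z, hz⟩ := IsIntegrallyClosed.isIntegral_iff.mp (Algebra.isIntegral_norm ℚ hxint)
  have hzP : (z : ℝ) = P ^ 2 := by
    have hC : ((z : ℝ) : ℂ) = ((P ^ 2 : ℝ) : ℂ) := by
      rw [← hchain, ← hz]
      simp
    exact_mod_cast hC
  have hz1 : 1 ≤ z := by
    have h0 : (0 : ℝ) ≤ (z : ℝ) := hzP ▸ sq_nonneg P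
    have hz0 : z ≠ 0 := by
      intro h
      rw [h] at hzP
      simp only [Int.cast_zero] at hzP
      exact hPne (sq_eq_zero_iff.mp hzP.symm)
    have : (0 : ℤ) ≤ z := by exact_mod_cast h0
    omega
  have h1P : (1 : ℝ) ≤ P ^ 2 := by
    rw [← hzP]
    exact_mod_cast hz1
  calc (1 : ℝ) ≤ |P| := by nlinarith [sq_abs P, abs_nonneg P]
    _ = ∏ j ∈ Finset.range (2 ^ n),
        |(aeval (2 * Real.cos (Real.pi * (2 * (j : ℝ) + 1) / (2 * ((2 ^ n : ℕ) : ℝ)))) f : ℝ)| :=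
      by rw [hPdef, Finset.abs_prod]

end ChebFrolovAux

/-- For `d = 2^n`, the Chebyshev-Frolov lattice `T(ℤ^d)` is admissible: there exists `δ > 0`
such that `∏_{i=1}^{d} |(T k)_i| ≥ δ` for every nonzero `k ∈ ℤ^d`. -/
theorem chebyshevFrolov_admissible (n : ℕ) :
    ∃ δ > 0, ∀ k : Fin (2 ^ n) → ℤ, k ≠ 0 →
      δ ≤ ∏ i, |(chebVandermonde (2 ^ n)).mulVec (fun j => (k j : ℝ)) i| := by
  classical
  refine ⟨1, one_pos, fun k hk => ?_⟩
  set f : Polynomial ℤ := ∑ j : Fin (2 ^ n), Polynomial.C (k j) * Polynomial.X ^ (j : ℕ)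
    with hfdef
  have hcoeff : ∀ j : Fin (2 ^ n), f.coeff (j : ℕ) = k j := by
    intro j
    rw [hfdef, Polynomial.finset_sum_coeff]
    rw [Finset.sum_eq_single j]
    · simp
    · intro b _ hbj
      rw [Polynomial.coeff_C_mul, Polynomial.coeff_X_pow,
        if_neg (fun h => hbj (Fin.ext h.symm))]
      simp
    · simp
  have hf : f ≠ 0 := by
    obtain ⟨j, hj⟩ : ∃ j, k j ≠ 0 := by
      by_contra h
      push_neg at h
      exact hk (funext h)
    intro h0
    exact hj (by rw [← hcoeff j, h0, Polynomial.coeff_zero])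
  have hdegf : f.natDegree < 2 ^ n := by
    rw [Polynomial.natDegree_lt_iff_degree_lt hf]
    refine lt_of_le_of_lt (Polynomial.degree_sum_le _ _) ?_
    rw [Finset.sup_lt_iff (WithBot.bot_lt_coe _)]
    intro j _
    exact lt_of_le_of_lt (Polynomial.degree_C_mul_X_pow_le _ _)
      (by exact_mod_cast j.isLt)
  have key := ChebFrolovAux.core n f hf hdegf
  have heval : ∀ i : Fin (2 ^ n),
      (chebVandermonde (2 ^ n)).mulVec (fun j => (k j : ℝ)) i
        = Polynomial.aeval
            (2 * Real.cos (Real.pi * (2 * (i : ℝ) + 1) / (2 * ((2 ^ n : ℕ) : ℝ)))) f := by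
    intro i
    rw [hfdef, map_sum]
    unfold Matrix.mulVec dotProduct chebVandermonde
    simp only [Matrix.of_apply, map_mul, Polynomial.aeval_C, Polynomial.aeval_X_pow,
      eq_intCast, map_intCast]
    congr 1
    ext j
    have harg : (2 * ((i : ℕ) + 1 : ℝ) - 1) = 2 * (i : ℝ) + 1 := by push_cast; ring
    rw [harg]
    push_cast
    ring
  calc (1 : ℝ)
      ≤ ∏ j ∈ Finset.range (2 ^ n),
        |(Polynomial.aeval
            (2 * Real.cos (Real.pi * (2 * (j : ℝ) + 1) / (2 * ((2 ^ n : ℕ) : ℝ)))) f : ℝ)| := key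
    _ = ∏ i, |(chebVandermonde (2 ^ n)).mulVec (fun j => (k j : ℝ)) i| := by
        rw [← Fin.prod_univ_eq_prod_range]
        exact Finset.prod_congr rfl fun i _ => by rw [heval i]
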